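/- Let G be an abelian p-group of exponent dividing p^l, and let H be a group of automorphisms of G such that [g,ₙh] = 1 for all g ∈ G and h ∈ H. Then the exponent of H is bounded by a function of p^l and n only. -/

import Mathlib

/-- Evaluation commutes with finite sums of additive endomorphisms. -/
lemma end_sum_apply {A : Type} [AddCommGroup A] (s : Finset ℕ) (f : ℕ → AddMonoid.End A)
    (a : A) : (∑ i ∈ s, f i) a = ∑ i ∈ s, f i a :=
  map_sum (AddMonoidHom.eval a : (A →+ A) →+ _) f s |>.symm ▸ rfl

/-- Key arithmetic fact: `p ^ l` divides the binomial coefficient `C((p^l)^n, k)`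
for `0 < k < n`. -/
lemma keydvd {p l n k : ℕ} (hp : p.Prime) (hk : k ≠ 0) (hkn : k < n) :
    p ^ l ∣ ((p ^ l) ^ n).choose k := by
  rw [← pow_mul]
  rcases Nat.eq_zero_or_pos l with rfl | hl
  · simp
  set t := k.factorization p with ht
  have htk : p ^ t ∣ k := Nat.ordProj_dvd k p
  have h2t : 2 ^ t ≤ k :=
    le_trans (Nat.pow_le_pow_left hp.two_le t) (Nat.le_of_dvd (Nat.pos_of_ne_zero hk) htk)
  have htlt : t < 2 ^ t := Nat.lt_two_pow_self
  obtain ⟨w, rfl⟩ : ∃ w, n = w + 1 := ⟨n - 1, by omega⟩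
  have hw : w ≤ l * w := Nat.le_mul_of_pos_left w hl
  have hmul : l * (w + 1) = l * w + l := by ring
  have hln : l + t ≤ l * (w + 1) := by omega
  -- the identity  M * C(M-1, k-1) = C(M, k) * k  with  M = p^(l*(w+1))
  set M := p ^ (l * (w + 1)) with hM
  have hM1 : 1 ≤ M := Nat.one_le_pow _ _ hp.pos
  have hid : M * Nat.choose (M - 1) (k - 1) = M.choose k * k := by
    have := Nat.add_one_mul_choose_eq (M - 1) (k - 1)
    have h1 : M - 1 + 1 = M := by omega
    have h2 : k - 1 + 1 = k := by omega
    rwa [h1, h2] at this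
  have hdvd : M ∣ M.choose k * k := ⟨_, hid.symm⟩
  -- strip off the `p`-part of `k`
  obtain ⟨k', hk'⟩ := htk
  have hndvd : ¬ p ∣ k' := by
    intro ⟨c, hc⟩
    have : p ^ (t + 1) ∣ k := ⟨c, by rw [hk', hc]; ring⟩
    have := (Nat.Prime.pow_dvd_iff_le_factorization hp hk).mp this
    omega
  have hdvd2 : p ^ (l * (w + 1) - t) * p ^ t ∣ (M.choose k * k') * p ^ t := by
    rw [← pow_add, Nat.sub_add_cancel (by omega)]
    calc p ^ (l * (w + 1)) = M := rfl
      _ ∣ M.choose k * k := hdvd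
      _ = M.choose k * k' * p ^ t := by rw [hk']; ring
  have hdvd3 : p ^ (l * (w + 1) - t) ∣ M.choose k * k' :=
    (Nat.mul_dvd_mul_iff_right (pow_pos hp.pos t)).mp hdvd2
  have hcop : Nat.Coprime (p ^ (l * (w + 1) - t)) k' :=
    Nat.Coprime.pow_left _ ((Nat.Prime.coprime_iff_not_dvd hp).mpr hndvd)
  have hdvd4 : p ^ (l * (w + 1) - t) ∣ M.choose k := hcop.dvd_of_dvd_mul_right hdvd3
  exact dvd_trans (pow_dvd_pow p (by omega)) hdvd4

/-- Main algebraic lemma: if `G` is an abelian group of exponent dividing `q = p ^ l` and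
`h` is an `n`-unipotent automorphism of `G`, then `h ^ q ^ n = 1`. -/
lemma auxmain {G : Type} [CommGroup G] {p l n : ℕ} (hp : p.Prime)
    (hexp : ∀ g : G, g ^ p ^ l = 1) (h : MulAut G)
    (hD : ∀ g : G, (fun a => a⁻¹ * h a)^[n] g = 1) :
    h ^ ((p ^ l) ^ n) = 1 := by
  set q := p ^ l with hq'
  set m := q ^ n with hm'
  -- the automorphism as an additive endomorphism
  let e : AddMonoid.End (Additive G) :=
    AddMonoidHom.mk' (fun a => Additive.ofMul (h a.toMul)) (fun a b => by
      simp [map_mul])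
  have he_apply : ∀ a : Additive G, e a = Additive.ofMul (h a.toMul) := fun a => rfl
  let d : AddMonoid.End (Additive G) := e - 1
  have hd_apply : ∀ a : Additive G, d a = Additive.ofMul (a.toMul⁻¹ * h a.toMul) := by
    intro a
    show e a - a = _
    rw [he_apply]
    calc Additive.ofMul (h a.toMul) - a
        = Additive.ofMul (h a.toMul) - Additive.ofMul a.toMul := rfl
      _ = Additive.ofMul (h a.toMul / a.toMul) := (ofMul_div _ _).symm
      _ = Additive.ofMul (a.toMul⁻¹ * h a.toMul) := by
          rw [div_eq_mul_inv, mul_comm]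
  have hda : ∀ (k : ℕ) (a : Additive G),
      (d ^ k) a = Additive.ofMul ((fun x => x⁻¹ * h x)^[k] a.toMul) := by
    intro k
    induction k with
    | zero => intro a; simp
    | succ k ih =>
      intro a
      rw [pow_succ]
      show (d ^ k) (d a) = _
      rw [hd_apply, ih, Function.iterate_succ_apply]
      rfl
  have hdn : ∀ k, n ≤ k → d ^ k = 0 := by
    intro k hk
    obtain ⟨j, rfl⟩ := Nat.exists_eq_add_of_le hk
    have hn0 : d ^ n = 0 := by
      refine DFunLike.ext _ _ fun a => ?_
      rw [hda]
      simp [hD]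
    rw [pow_add, hn0, zero_mul]
  have hqa : ∀ a : Additive G, q • a = 0 := by
    intro a
    calc q • a = q • Additive.ofMul a.toMul := rfl
      _ = Additive.ofMul (a.toMul ^ q) := by simp
      _ = Additive.ofMul (1 : G) := by rw [hexp]
      _ = 0 := rfl
  have he : ∀ (j : ℕ) (a : Additive G), (e ^ j) a = Additive.ofMul ((h ^ j) a.toMul) := by
    intro j
    induction j with
    | zero => intro a; simp
    | succ j ih =>
      intro a
      rw [pow_succ]
      show (e ^ j) (e a) = _
      rw [he_apply, ih, pow_succ, MulAut.mul_apply]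
      rfl
  -- the binomial expansion
  have key : e ^ m = 1 := by
    have hed : e = d + 1 := by simp [d]
    rw [hed, (Commute.one_right d).add_pow]
    refine DFunLike.ext _ _ fun a => ?_
    rw [end_sum_apply]
    have h0 : ∀ k ∈ Finset.range (m + 1), k ≠ 0 →
        ((d ^ k * 1 ^ (m - k) * ((m.choose k : ℕ) : AddMonoid.End (Additive G)) :
          AddMonoid.End (Additive G))) a = 0 := by
      intro k _ hk0
      by_cases hkn : k < n
      · obtain ⟨c, hc⟩ := keydvd hp hk0 hkn
        show (d ^ k * 1 ^ (m - k)) (((m.choose k : ℕ) : AddMonoid.End (Additive G)) a) = 0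
        rw [AddMonoid.End.natCast_apply, hm', hc, mul_comm q c, mul_smul, hqa, smul_zero,
          map_zero]
      · rw [hdn k (le_of_not_gt hkn), zero_mul, zero_mul]
        rfl
    rw [Finset.sum_eq_single_of_mem 0 (Finset.mem_range.mpr (Nat.succ_pos m)) h0]
    simp
  -- conclude
  ext g
  have h1 := he m (Additive.ofMul g)
  rw [key] at h1
  have h2 : Additive.ofMul g = Additive.ofMul ((h ^ m) g) := h1
  have h3 : (h ^ m) g = g := (Additive.ofMul.injective h2).symm
  simpa using h3

/-- The exponent of a group of `n`-unipotent automorphisms of an abelian `p`-group of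
exponent dividing `p^l` is bounded in terms of `p^l` and `n` only. -/
theorem stmt_5 :
    ∃ f : ℕ → ℕ → ℕ, (∀ q n, 0 < f q n) ∧
      ∀ (p l n : ℕ), p.Prime →
        ∀ (G : Type) (_ : CommGroup G),
          (∀ g : G, g ^ p ^ l = 1) →
          ∀ H : Subgroup (MulAut G),
            (∀ h ∈ H, ∀ g : G, (fun a => a⁻¹ * h a)^[n] g = 1) →
            ∀ h ∈ H, h ^ f (p ^ l) n = 1 := by
  refine ⟨fun q n => max 1 (q ^ n), fun q n => lt_of_lt_of_le Nat.zero_lt_one (le_max_left _ _),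
    ?_⟩
  intro p l n hp G _ hexp H hH h hh
  have hmax : max 1 ((p ^ l) ^ n) = (p ^ l) ^ n :=
    max_eq_right (Nat.one_le_pow _ _ (pow_pos hp.pos l))
  show h ^ max 1 ((p ^ l) ^ n) = 1
  rw [hmax]
  exact auxmain hp hexp h (hH h hh)
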